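/- Let σ ∈ S_k, τ ∈ S_ℓ, n = k+ℓ, and let ρ ∈ S_n be a shuffle of σ and τ̄ (where τ̄ adds k to every letter of τ). Then the RSK insertion tableau of ρ, restricted to entries {1,...,k}, equals the RSK insertion tableau of σ; and the standardization of its restriction to entries {k+1,...,n} equals the RSK insertion tableau of τ. -/

import Mathlib

/-- `u` is the one-line word of a permutation of `{1, …, n}`. -/
def IsPermWord (n : ℕ) (u : List ℕ) : Prop := u.Perm (List.range' 1 n)

/-- The left inversion set of a word `u`. -/
def InvW (u : List ℕ) : Set (ℕ × ℕ) :=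
  {p | p.1 < p.2 ∧ p.1 ∈ u ∧ p.2 ∈ u ∧ u.idxOf p.2 < u.idxOf p.1}

/-- Schensted row insertion of `x` into a row: returns the new row together with the
bumped entry (if any). -/
def rowInsert : List ℕ → ℕ → List ℕ × Option ℕ
  | [], x => ([x], none)
  | a :: r, x =>
    if a ≤ x then
      let p := rowInsert r x
      (a :: p.1, p.2)
    else (x :: r, some a)

/-- Schensted insertion of `x` into a tableau (a list of rows). -/
def tabInsert : List (List ℕ) → ℕ → List (List ℕ)
  | [], x => [[x]]
  | row :: rest, x =>
    match rowInsert row x with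
    | (row', none) => row' :: rest
    | (row', some b) => row' :: tabInsert rest b

/-- The RSK insertion tableau `P(w)` of a word `w`. -/
def RSKP (w : List ℕ) : List (List ℕ) := w.foldl tabInsert []

/-- The shape of a tableau: the list of its row lengths. -/
def shape (T : List (List ℕ)) : List ℕ := T.map List.length

/-- `T` is a standard Young tableau with `n` cells: its entries are exactly `1, …, n`,
its rows are nonempty and strictly increasing, and its columns are strictly increasing
(in particular row lengths weakly decrease). -/
def IsSYT (n : ℕ) (T : List (List ℕ)) : Prop :=
  T.flatten.Perm (List.range' 1 n) ∧
  (∀ r ∈ T, r ≠ [] ∧ List.Chain' (· < ·) r) ∧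
  List.Chain' (fun r₁ r₂ => r₂.length ≤ r₁.length ∧
    ∀ c, c < r₂.length → r₁.getD c 0 < r₂.getD c 0) T

/-- The (skew) restriction of a tableau to the entries lying in the segment `[i, j]`. -/
def restrictTab (T : List (List ℕ)) (i j : ℕ) : List (List ℕ) :=
  T.map (List.filter (fun v => decide (i ≤ v ∧ v ≤ j)))

/-- The row reading word of a (skew) tableau: rows read left to right,
from the bottom row up. -/
def readWord (T : List (List ℕ)) : List ℕ := T.reverse.flatten

/-- The standardization `st(T_{[i,j]})` of the restriction of `T` to the segment `[i, j]`:
lower all entries by `i - 1` and rectify to straight shape by jeu de taquin; rectification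
is computed as the RSK insertion tableau of the row reading word, which agrees with
jeu de taquin rectification. -/
def stTab (T : List (List ℕ)) (i j : ℕ) : List (List ℕ) :=
  RSKP ((readWord (restrictTab T i j)).map (fun v => v - (i - 1)))

lemma tabInsert_of_none {row r' : List ℕ} {rest : List (List ℕ)} {x : ℕ} (h : rowInsert row x = (r', none)) :
    tabInsert (row :: rest) x = r' :: rest := by simp [tabInsert, h]

lemma tabInsert_of_some {row r' : List ℕ} {rest : List (List ℕ)} {x b : ℕ} (h : rowInsert row x = (r', some b)) :
    tabInsert (row :: rest) x = r' :: tabInsert rest b := by simp [tabInsert, h]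

lemma rowInsert_all_le {P : List ℕ} {x : ℕ} (h : ∀ a ∈ P, a ≤ x) :
    rowInsert P x = (P ++ [x], none) := by
  induction P with
  | nil => rfl
  | cons a r ih =>
    simp only [rowInsert, if_pos (h a (by simp))]
    simp [ih (fun a ha => h a (by simp [ha]))]

lemma rowInsert_split {P Q : List ℕ} {x b : ℕ} (hP : ∀ a ∈ P, a ≤ x) (hb : x < b) :
    rowInsert (P ++ b :: Q) x = (P ++ x :: Q, some b) := by
  induction P with
  | nil => simp [rowInsert, Nat.not_le.2 hb]
  | cons a r ih =>
    simp only [List.cons_append, rowInsert, if_pos (hP a (by simp))]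
    simp [ih (fun a ha => hP a (by simp [ha]))]

lemma chain'_le_head {a : ℕ} {r : List ℕ} (h : List.Chain' (·≤·) (a :: r)) :
    ∀ c ∈ r, a ≤ c := by
  have := List.isChain_iff_pairwise.1 h
  intro c hc
  exact (List.pairwise_cons.1 this).1 c hc

lemma split2 {R : List ℕ} (hR : List.Chain' (·≤·) R) (t : ℕ) :
    ∃ P Q, R = P ++ Q ∧ (∀ a ∈ P, a ≤ t) ∧ (∀ c ∈ Q, t < c) ∧
      List.Chain' (·≤·) P ∧ List.Chain' (·≤·) Q := by
  induction R with
  | nil => exact ⟨[], [], by simp, by simp, by simp, by simp [List.Chain'], by simp [List.Chain']⟩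
  | cons a r ih =>
    by_cases ha : a ≤ t
    · obtain ⟨P, Q, hPQ, h1, h2, h3, h4⟩ := ih hR.tail
      refine ⟨a :: P, Q, by simp [hPQ], ?_, h2, ?_, h4⟩
      · intro c hc; rcases List.mem_cons.1 hc with h | h
        · omega
        · exact h1 c h
      · have : List.Sublist (a :: P) (a :: r) := by
          apply List.cons_sublist_cons.2
          exact hPQ ▸ List.sublist_append_left P Q
        exact hR.sublist this
    · refine ⟨[], a :: r, by simp, by simp, ?_, by simp [List.Chain'], hR⟩
      intro c hc; rcases List.mem_cons.1 hc with h | h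
      · omega
      · exact lt_of_lt_of_le (Nat.not_le.1 ha) (chain'_le_head hR c h)

lemma chain'_snoc_le {R : List ℕ} {x : ℕ} (hc : List.Chain' (·≤·) R) (h : ∀ a ∈ R, a ≤ x) :
    List.Chain' (·≤·) (R ++ [x]) := by
  simp only [List.Chain'] at *
  rw [List.isChain_append]
  refine ⟨hc, List.isChain_singleton x, ?_⟩
  intro a ha b hb
  simp only [List.head?_cons, Option.mem_some_iff] at hb
  subst hb
  obtain ⟨h', rfl⟩ := List.mem_getLast?_eq_getLast ha
  exact h _ (List.getLast_mem h')

lemma chain'_replace {P Q : List ℕ} {x b : ℕ} (h : List.Chain' (·≤·) (P ++ b :: Q))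
    (hP : ∀ a ∈ P, a ≤ x) (hxb : x ≤ b) : List.Chain' (·≤·) (P ++ x :: Q) := by
  simp only [List.Chain'] at h ⊢
  rw [List.isChain_append] at h ⊢
  obtain ⟨h1, h2, h3⟩ := h
  rw [List.isChain_cons] at h2 ⊢
  refine ⟨h1, ⟨fun y hy => le_trans hxb (h2.1 y hy), h2.2⟩, ?_⟩
  intro a ha b' hb'
  simp only [List.head?_cons, Option.mem_some_iff] at hb'
  subst hb'
  obtain ⟨h', rfl⟩ := List.mem_getLast?_eq_getLast ha
  exact hP _ (List.getLast_mem h')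

lemma split4 {R : List ℕ} (hR : List.Chain' (·≤·) R) {x y z : ℕ} (hxy : x ≤ y) (hyz : y ≤ z) :
    ∃ A M N E, R = A ++ M ++ N ++ E ∧ (∀ a ∈ A, a ≤ x) ∧ (∀ m ∈ M, x < m ∧ m ≤ y) ∧
      (∀ n ∈ N, y < n ∧ n ≤ z) ∧ (∀ e ∈ E, z < e) ∧ List.Chain' (·≤·) E ∧
      List.Chain' (·≤·) N := by
  obtain ⟨P, E, rfl, hP, hE, hPc, hEc⟩ := split2 hR z
  obtain ⟨P2, N, rfl, hP2, hN, hP2c, hNc⟩ := split2 hPc y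
  obtain ⟨A, M, rfl, hA, hM, hAc, hMc⟩ := split2 hP2c x
  refine ⟨A, M, N, E, by simp, hA, ?_, ?_, hE, hEc, hNc⟩
  · exact fun m hm => ⟨hM m hm, hP2 m (by simp [hm])⟩
  · exact fun n hn => ⟨hN n hn, hP n (by simp [hn])⟩

def RowsWeak (T : List (List ℕ)) : Prop := ∀ r ∈ T, List.Chain' (·≤·) r

lemma RowsWeak.tail {R : List ℕ} {T : List (List ℕ)} (h : RowsWeak (R :: T)) : RowsWeak T :=
  fun r hr => h r (by simp [hr])

lemma RowsWeak.head {R : List ℕ} {T : List (List ℕ)} (h : RowsWeak (R :: T)) :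
    List.Chain' (·≤·) R := h R (by simp)

lemma rowsWeak_tabInsert {T : List (List ℕ)} {x : ℕ} (h : RowsWeak T) :
    RowsWeak (tabInsert T x) := by
  induction T generalizing x with
  | nil =>
    intro r hr
    simp only [tabInsert, List.mem_singleton] at hr
    subst hr; exact List.isChain_singleton x
  | cons row rest ih =>
    obtain ⟨P, Q, rfl, hP, hQ, hPc, hQc⟩ := split2 (h.head) x
    rcases Q with _ | ⟨b, Q'⟩
    · rw [List.append_nil] at *
      rw [tabInsert_of_none (rowInsert_all_le hP)]
      intro r hr
      rcases List.mem_cons.1 hr with rfl | hr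
      · exact chain'_snoc_le h.head hP
      · exact h.tail r hr
    · rw [tabInsert_of_some (rowInsert_split hP (hQ b (by simp)))]
      intro r hr
      rcases List.mem_cons.1 hr with rfl | hr
      · exact chain'_replace h.head hP (le_of_lt (hQ b (by simp)))
      · exact ih h.tail r hr

lemma rowsWeak_fold {T : List (List ℕ)} (h : RowsWeak T) (w : List ℕ) :
    RowsWeak (List.foldl tabInsert T w) := by
  induction w generalizing T with
  | nil => exact h
  | cons a w ih => exact ih (rowsWeak_tabInsert h)

lemma all_le_append {P Q : List ℕ} {t : ℕ} (hP : ∀ a ∈ P, a ≤ t) (hQ : ∀ a ∈ Q, a ≤ t) :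
    ∀ a ∈ P ++ Q, a ≤ t := by
  intro a ha; rcases List.mem_append.1 ha with h | h
  exacts [hP a h, hQ a h]

lemma all_le_cons {Q : List ℕ} {b t : ℕ} (hb : b ≤ t) (hQ : ∀ a ∈ Q, a ≤ t) :
    ∀ a ∈ b :: Q, a ≤ t := by
  intro a ha; rcases List.mem_cons.1 ha with rfl | h
  exacts [hb, hQ a h]

lemma all_le_nil {t : ℕ} : ∀ a ∈ ([] : List ℕ), a ≤ t := by simp

lemma tabIns_split {row P Q : List ℕ} {rest : List (List ℕ)} {x b : ℕ}
    (hrow : row = P ++ b :: Q) (hP : ∀ a ∈ P, a ≤ x) (hb : x < b) :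
    tabInsert (row :: rest) x = (P ++ x :: Q) :: tabInsert rest b := by
  subst hrow; exact tabInsert_of_some (rowInsert_split hP hb)

lemma tabIns_le {row : List ℕ} {rest : List (List ℕ)} {x : ℕ} (h : ∀ a ∈ row, a ≤ x) :
    tabInsert (row :: rest) x = (row ++ [x]) :: rest :=
  tabInsert_of_none (rowInsert_all_le h)

lemma E1 (T : List (List ℕ)) (hT : RowsWeak T) {x y z : ℕ} (hxy : x < y) (hyz : y ≤ z) :
    tabInsert (tabInsert (tabInsert T y) x) z = tabInsert (tabInsert (tabInsert T y) z) x := by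
  induction T generalizing x y z with
  | nil =>
    have h1 : ¬ y ≤ x := Nat.not_le.2 hxy
    have h2 : x ≤ z := le_trans (le_of_lt hxy) hyz
    simp [tabInsert, rowInsert, h1, h2, hyz]
  | cons R rest ih =>
    have hrest := hT.tail
    obtain ⟨A, M, N, E, rfl, hA, hM, hN, hE, hEc, hNc⟩ := split4 hT.head (le_of_lt hxy) hyz
    have hAx : ∀ a ∈ A, a ≤ x := hA
    have hAy : ∀ a ∈ A, a ≤ y := fun a h => le_trans (hA a h) (le_of_lt hxy)
    have hAz : ∀ a ∈ A, a ≤ z := fun a h => le_trans (hAy a h) hyz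
    have hxz : x ≤ z := le_trans (le_of_lt hxy) hyz
    rcases M with _ | ⟨m1, M'⟩ <;> rcases N with _ | ⟨n1, N'⟩
    · -- M = [], N = []
      rcases E with _ | ⟨e1, E'⟩
      · -- E = []  (case 8)
        rw [tabIns_le (all_le_append (all_le_append (all_le_append hAy all_le_nil) all_le_nil)
          all_le_nil)]
        rw [tabIns_split (show (A ++ ([]:List ℕ) ++ ([]:List ℕ) ++ ([]:List ℕ)) ++ [y]
            = A ++ y :: [] by simp) hAx hxy]
        rw [tabIns_le (all_le_append hAz (all_le_cons hxz all_le_nil))]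
        rw [tabIns_le (all_le_append (all_le_append (all_le_append (all_le_append hAz
          all_le_nil) all_le_nil) all_le_nil) (all_le_cons hyz all_le_nil))]
        rw [tabIns_split (show (A ++ ([]:List ℕ) ++ ([]:List ℕ) ++ ([]:List ℕ)) ++ [y] ++ [z]
            = A ++ y :: [z] by simp) hAx hxy]
        simp
      · -- E = e1 :: E'  (case 7)
        have he1 : z < e1 := hE e1 (by simp)
        have hye1 : y < e1 := lt_of_le_of_lt hyz he1
        rw [tabIns_split (show A ++ ([]:List ℕ) ++ ([]:List ℕ) ++ (e1 :: E')
            = A ++ e1 :: E' by simp) hAy hye1]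
        rcases E' with _ | ⟨e2, E''⟩
        · rw [tabIns_split (show A ++ y :: ([]:List ℕ) = A ++ y :: [] from rfl) hAx hxy]
          rw [tabIns_le (all_le_append hAz (all_le_cons hxz all_le_nil))]
          rw [tabIns_le (all_le_append hAz (all_le_cons hyz all_le_nil))]
          rw [tabIns_split (show (A ++ y :: ([]:List ℕ)) ++ [z] = A ++ y :: [z] by simp)
            hAx hxy]
          simp
        · have he2 : z < e2 := hE e2 (by simp)
          have he12 : e1 ≤ e2 := (List.isChain_cons_cons.1 hEc).1
          rw [tabIns_split (show A ++ y :: (e2 :: E'') = A ++ y :: (e2 :: E'') from rfl)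
            hAx hxy]
          rw [tabIns_split (show A ++ x :: (e2 :: E'') = (A ++ [x]) ++ e2 :: E'' by simp)
            (all_le_append hAz (all_le_cons hxz all_le_nil)) he2]
          rw [tabIns_split (show A ++ y :: (e2 :: E'') = (A ++ [y]) ++ e2 :: E'' by simp)
            (all_le_append hAz (all_le_cons hyz all_le_nil)) he2]
          rw [tabIns_split (show (A ++ [y]) ++ z :: E'' = A ++ y :: (z :: E'') by simp)
            hAx hxy]
          rw [ih hrest hye1 he12]
          simp
    · -- M = [], N = n1 :: N'
      have hn1 : y < n1 := (hN n1 (by simp)).1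
      have hN'z : ∀ a ∈ N', a ≤ z := fun a h => (hN a (by simp [h])).2
      rcases E with _ | ⟨e1, E'⟩
      · -- E = [] (case 6)
        rw [tabIns_split (show A ++ ([]:List ℕ) ++ (n1 :: N') ++ ([]:List ℕ)
            = A ++ n1 :: N' by simp) hAy hn1]
        rw [tabIns_split (show A ++ y :: N' = A ++ y :: N' from rfl) hAx hxy]
        rw [tabIns_le (all_le_append hAz (all_le_cons hxz hN'z))]
        rw [tabIns_le (all_le_append hAz (all_le_cons hyz hN'z))]
        rw [tabIns_split (show (A ++ y :: N') ++ [z] = A ++ y :: (N' ++ [z]) by simp)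
          hAx hxy]
        simp
      · -- E = e1 :: E' (case 5)
        have he1 : z < e1 := hE e1 (by simp)
        have hn1e1 : n1 ≤ e1 := le_trans (hN n1 (by simp)).2 (le_of_lt he1)
        rw [tabIns_split (show A ++ ([]:List ℕ) ++ (n1 :: N') ++ (e1 :: E')
            = A ++ n1 :: (N' ++ (e1 :: E')) by simp) hAy hn1]
        rw [tabIns_split (show A ++ y :: (N' ++ (e1 :: E'))
            = A ++ y :: (N' ++ (e1 :: E')) from rfl) hAx hxy]
        rw [tabIns_split (show A ++ x :: (N' ++ (e1 :: E')) = (A ++ x :: N') ++ e1 :: E'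
            by simp) (all_le_append hAz (all_le_cons hxz hN'z)) he1]
        rw [tabIns_split (show A ++ y :: (N' ++ (e1 :: E')) = (A ++ y :: N') ++ e1 :: E'
            by simp) (all_le_append hAz (all_le_cons hyz hN'z)) he1]
        rw [tabIns_split (show (A ++ y :: N') ++ z :: E' = A ++ y :: (N' ++ z :: E')
            by simp) hAx hxy]
        rw [ih hrest hn1 hn1e1]
        simp
    · -- M = m1 :: M', N = []
      have hm1 : x < m1 := (hM m1 (by simp)).1
      have hMy : ∀ a ∈ m1 :: M', a ≤ y := fun a h => (hM a h).2
      have hM'y : ∀ a ∈ M', a ≤ y := fun a h => (hM a (by simp [h])).2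
      have hM'z : ∀ a ∈ M', a ≤ z := fun a h => le_trans (hM'y a h) hyz
      have hMz : ∀ a ∈ m1 :: M', a ≤ z := fun a h => le_trans (hMy a h) hyz
      rcases E with _ | ⟨e1, E'⟩
      · -- case 4
        rw [tabIns_le (all_le_append (all_le_append (all_le_append hAy hMy) all_le_nil)
          all_le_nil)]
        rw [tabIns_split (show (A ++ (m1 :: M') ++ ([]:List ℕ) ++ ([]:List ℕ)) ++ [y]
            = A ++ m1 :: (M' ++ [y]) by simp) hAx hm1]
        rw [tabIns_le (all_le_append hAz (all_le_cons hxz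
          (all_le_append hM'z (all_le_cons hyz all_le_nil))))]
        rw [tabIns_le (all_le_append (all_le_append (all_le_append (all_le_append hAz hMz)
          all_le_nil) all_le_nil) (all_le_cons hyz all_le_nil))]
        rw [tabIns_split (show (A ++ (m1 :: M') ++ ([]:List ℕ) ++ ([]:List ℕ)) ++ [y] ++ [z]
            = A ++ m1 :: (M' ++ [y] ++ [z]) by simp) hAx hm1]
        simp
      · -- case 3
        have he1 : z < e1 := hE e1 (by simp)
        have hye1 : y < e1 := lt_of_le_of_lt hyz he1
        have hm1e1 : m1 < e1 := lt_of_le_of_lt (le_trans (hM m1 (by simp)).2 hyz) he1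
        rw [tabIns_split (show A ++ (m1 :: M') ++ ([]:List ℕ) ++ (e1 :: E')
            = (A ++ (m1 :: M')) ++ e1 :: E' by simp) (all_le_append hAy hMy) hye1]
        rw [tabIns_split (show (A ++ (m1 :: M')) ++ y :: E' = A ++ m1 :: (M' ++ y :: E')
            by simp) hAx hm1]
        rcases E' with _ | ⟨e2, E''⟩
        · rw [tabIns_le (all_le_append hAz (all_le_cons hxz
            (all_le_append hM'z (all_le_cons hyz all_le_nil))))]
          rw [tabIns_le (all_le_append (all_le_append hAz hMz) (all_le_cons hyz all_le_nil))]
          rw [tabIns_split (show ((A ++ (m1 :: M')) ++ y :: ([]:List ℕ)) ++ [z]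
              = A ++ m1 :: (M' ++ y :: [z]) by simp) hAx hm1]
          simp
        · have he2 : z < e2 := hE e2 (by simp)
          have he12 : e1 ≤ e2 := (List.isChain_cons_cons.1 hEc).1
          rw [tabIns_split (show A ++ x :: (M' ++ y :: (e2 :: E''))
              = (A ++ x :: (M' ++ [y])) ++ e2 :: E'' by simp)
            (all_le_append hAz (all_le_cons hxz (all_le_append hM'z
              (all_le_cons hyz all_le_nil)))) he2]
          rw [tabIns_split (show (A ++ (m1 :: M')) ++ y :: (e2 :: E'')
              = ((A ++ (m1 :: M')) ++ [y]) ++ e2 :: E'' by simp)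
            (all_le_append (all_le_append hAz hMz) (all_le_cons hyz all_le_nil)) he2]
          rw [tabIns_split (show ((A ++ (m1 :: M')) ++ [y]) ++ z :: E''
              = A ++ m1 :: (M' ++ [y] ++ z :: E'') by simp) hAx hm1]
          rw [ih hrest hm1e1 he12]
          simp
    · -- M = m1 :: M', N = n1 :: N'
      have hm1 : x < m1 := (hM m1 (by simp)).1
      have hMy : ∀ a ∈ m1 :: M', a ≤ y := fun a h => (hM a h).2
      have hM'y : ∀ a ∈ M', a ≤ y := fun a h => (hM a (by simp [h])).2
      have hM'z : ∀ a ∈ M', a ≤ z := fun a h => le_trans (hM'y a h) hyz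
      have hMz : ∀ a ∈ m1 :: M', a ≤ z := fun a h => le_trans (hMy a h) hyz
      have hn1 : y < n1 := (hN n1 (by simp)).1
      have hN'z : ∀ a ∈ N', a ≤ z := fun a h => (hN a (by simp [h])).2
      have hm1n1 : m1 < n1 := lt_of_le_of_lt (hM m1 (by simp)).2 hn1
      rcases E with _ | ⟨e1, E'⟩
      · -- case 2
        rw [tabIns_split (show A ++ (m1 :: M') ++ (n1 :: N') ++ ([]:List ℕ)
            = (A ++ (m1 :: M')) ++ n1 :: N' by simp) (all_le_append hAy hMy) hn1]
        rw [tabIns_split (show (A ++ (m1 :: M')) ++ y :: N' = A ++ m1 :: (M' ++ y :: N')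
            by simp) hAx hm1]
        rw [tabIns_le (all_le_append hAz (all_le_cons hxz
          (all_le_append hM'z (all_le_cons hyz hN'z))))]
        rw [tabIns_le (all_le_append (all_le_append hAz hMz) (all_le_cons hyz hN'z))]
        rw [tabIns_split (show ((A ++ (m1 :: M')) ++ y :: N') ++ [z]
            = A ++ m1 :: (M' ++ y :: (N' ++ [z])) by simp) hAx hm1]
        simp
      · -- case 1
        have he1 : z < e1 := hE e1 (by simp)
        have hn1e1 : n1 ≤ e1 := le_trans (hN n1 (by simp)).2 (le_of_lt he1)
        rw [tabIns_split (show A ++ (m1 :: M') ++ (n1 :: N') ++ (e1 :: E')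
            = (A ++ (m1 :: M')) ++ n1 :: (N' ++ (e1 :: E')) by simp)
          (all_le_append hAy hMy) hn1]
        rw [tabIns_split (show (A ++ (m1 :: M')) ++ y :: (N' ++ (e1 :: E'))
            = A ++ m1 :: (M' ++ y :: (N' ++ (e1 :: E'))) by simp) hAx hm1]
        rw [tabIns_split (show A ++ x :: (M' ++ y :: (N' ++ (e1 :: E')))
            = (A ++ x :: (M' ++ y :: N')) ++ e1 :: E' by simp)
          (all_le_append hAz (all_le_cons hxz (all_le_append hM'z
            (all_le_cons hyz hN'z)))) he1]
        rw [tabIns_split (show (A ++ (m1 :: M')) ++ y :: (N' ++ (e1 :: E'))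
            = ((A ++ (m1 :: M')) ++ y :: N') ++ e1 :: E' by simp)
          (all_le_append (all_le_append hAz hMz) (all_le_cons hyz hN'z)) he1]
        rw [tabIns_split (show ((A ++ (m1 :: M')) ++ y :: N') ++ z :: E'
            = A ++ m1 :: (M' ++ y :: (N' ++ z :: E')) by simp) hAx hm1]
        rw [ih hrest hm1n1 hn1e1]
        simp

lemma E2 (T : List (List ℕ)) (hT : RowsWeak T) {x y z : ℕ} (hxy : x ≤ y) (hyz : y < z) :
    tabInsert (tabInsert (tabInsert T x) z) y = tabInsert (tabInsert (tabInsert T z) x) y := by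
  induction T generalizing x y z with
  | nil =>
    have h1 : x ≤ z := le_trans hxy (le_of_lt hyz)
    have h2 : ¬ z ≤ y := Nat.not_le.2 hyz
    have h3 : ¬ z ≤ x := Nat.not_le.2 (lt_of_le_of_lt hxy hyz)
    simp [tabInsert, rowInsert, h1, h2, h3, hxy]
  | cons R rest ih =>
    have hrest := hT.tail
    obtain ⟨A, M, N, E, rfl, hA, hM, hN, hE, hEc, hNc⟩ := split4 hT.head hxy (le_of_lt hyz)
    have hAx : ∀ a ∈ A, a ≤ x := hA
    have hAy : ∀ a ∈ A, a ≤ y := fun a h => le_trans (hA a h) hxy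
    have hAz : ∀ a ∈ A, a ≤ z := fun a h => le_trans (hAy a h) (le_of_lt hyz)
    have hxz : x < z := lt_of_le_of_lt hxy hyz
    have hxz' : x ≤ z := le_of_lt hxz
    have hNz₀ : ∀ a ∈ N, a ≤ z := fun a h => (hN a h).2
    rcases M with _ | ⟨m1, M'⟩
    · rcases N with _ | ⟨n1, N'⟩
      · rcases E with _ | ⟨e1, E'⟩
        · -- case D : M = N = E = []
          rw [tabIns_le (all_le_append (all_le_append (all_le_append hAx all_le_nil)
            all_le_nil) all_le_nil)]
          rw [tabIns_le (all_le_append (all_le_append (all_le_append (all_le_append hAz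
            all_le_nil) all_le_nil) all_le_nil) (all_le_cons hxz' all_le_nil))]
          rw [tabIns_split (show (A ++ ([]:List ℕ) ++ ([]:List ℕ) ++ ([]:List ℕ) ++ [x]) ++ [z]
              = (A ++ ([]:List ℕ) ++ ([]:List ℕ) ++ ([]:List ℕ) ++ [x]) ++ z :: [] by simp)
            (all_le_append (all_le_append (all_le_append (all_le_append hAy all_le_nil)
              all_le_nil) all_le_nil) (all_le_cons hxy all_le_nil)) hyz]
          rw [tabIns_le (all_le_append (all_le_append (all_le_append hAz all_le_nil)
            all_le_nil) all_le_nil)]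
          rw [tabIns_split (show A ++ ([]:List ℕ) ++ ([]:List ℕ) ++ ([]:List ℕ) ++ [z]
              = (A ++ ([]:List ℕ) ++ ([]:List ℕ) ++ ([]:List ℕ)) ++ z :: [] by simp)
            (all_le_append (all_le_append (all_le_append hAx all_le_nil) all_le_nil)
              all_le_nil) hxz]
          rw [tabIns_le (all_le_append (all_le_append (all_le_append (all_le_append hAy
            all_le_nil) all_le_nil) all_le_nil) (all_le_cons hxy all_le_nil))]
          skip
        · -- case C : M = N = [], E = e1 :: E'
          have he1 : z < e1 := hE e1 (by simp)
          have hxe1 : x < e1 := lt_trans hxz he1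
          rw [tabIns_split (show A ++ ([]:List ℕ) ++ ([]:List ℕ) ++ (e1 :: E')
              = A ++ e1 :: E' by simp) hAx hxe1]
          rw [tabIns_split (show A ++ ([]:List ℕ) ++ ([]:List ℕ) ++ (e1 :: E')
              = A ++ e1 :: E' by simp) hAz he1]
          rw [tabIns_split (show A ++ z :: E' = A ++ z :: E' from rfl) hAx hxz]
          rcases E' with _ | ⟨e2, E''⟩
          · rw [tabIns_le (all_le_append hAz (all_le_cons hxz' all_le_nil))]
            rw [tabIns_split (show (A ++ x :: ([]:List ℕ)) ++ [z] = (A ++ [x]) ++ z :: []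
                by simp) (all_le_append hAy (all_le_cons hxy all_le_nil)) hyz]
            rw [tabIns_le (all_le_append hAy (all_le_cons hxy all_le_nil))]
            skip
          · have he2 : z < e2 := hE e2 (by simp)
            have hye2 : y < e2 := lt_trans hyz he2
            have he12 : e1 ≤ e2 := (List.isChain_cons_cons.1 hEc).1
            rw [tabIns_split (show A ++ x :: (e2 :: E'') = (A ++ [x]) ++ e2 :: E'' by simp)
              (all_le_append hAz (all_le_cons hxz' all_le_nil)) he2]
            rw [tabIns_split (show (A ++ [x]) ++ z :: E'' = (A ++ [x]) ++ z :: E'' from rfl)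
              (all_le_append hAy (all_le_cons hxy all_le_nil)) hyz]
            rw [tabIns_split (show A ++ x :: (e2 :: E'') = (A ++ [x]) ++ e2 :: E'' by simp)
              (all_le_append hAy (all_le_cons hxy all_le_nil)) hye2]
            rw [← E1 rest hrest he1 he12]
            skip
      · -- case B : M = [], N = n1 :: N'
        have hn1 : y < n1 := (hN n1 (by simp)).1
        have hxn1 : x < n1 := lt_of_le_of_lt hxy hn1
        have hn1z : n1 ≤ z := (hN n1 (by simp)).2
        have hN'z : ∀ a ∈ N', a ≤ z := fun a h => (hN a (by simp [h])).2
        have hNz : ∀ a ∈ n1 :: N', a ≤ z := fun a h => (hN a h).2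
        rcases E with _ | ⟨e1, E'⟩
        · -- B, E = []
          rw [tabIns_split (show A ++ ([]:List ℕ) ++ (n1 :: N') ++ ([]:List ℕ)
              = A ++ n1 :: N' by simp) hAx hxn1]
          rw [tabIns_le (all_le_append hAz (all_le_cons hxz' hN'z))]
          rw [tabIns_le (all_le_append (all_le_append (all_le_append hAz all_le_nil) hNz)
            all_le_nil)]
          rw [tabIns_split (show A ++ ([]:List ℕ) ++ (n1 :: N') ++ ([]:List ℕ) ++ [z]
              = A ++ n1 :: (N' ++ [z]) by simp) hAx hxn1]
          rcases N' with _ | ⟨n2, N''⟩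
          · rw [tabIns_split (show (A ++ x :: ([]:List ℕ)) ++ [z] = (A ++ [x]) ++ z :: []
                by simp) (all_le_append hAy (all_le_cons hxy all_le_nil)) hyz]
            rw [tabIns_split (show A ++ x :: (([]:List ℕ) ++ [z]) = (A ++ [x]) ++ z :: []
                by simp) (all_le_append hAy (all_le_cons hxy all_le_nil)) hyz]
            skip
          · have hn2 : y < n2 := (hN n2 (by simp)).1
            rw [tabIns_split (show (A ++ x :: (n2 :: N'')) ++ [z]
                = (A ++ [x]) ++ n2 :: (N'' ++ [z]) by simp)
              (all_le_append hAy (all_le_cons hxy all_le_nil)) hn2]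
            rw [tabIns_split (show A ++ x :: ((n2 :: N'') ++ [z])
                = (A ++ [x]) ++ n2 :: (N'' ++ [z]) by simp)
              (all_le_append hAy (all_le_cons hxy all_le_nil)) hn2]
            skip
        · -- B, E = e1 :: E'
          have he1 : z < e1 := hE e1 (by simp)
          rw [tabIns_split (show A ++ ([]:List ℕ) ++ (n1 :: N') ++ (e1 :: E')
              = A ++ n1 :: (N' ++ (e1 :: E')) by simp) hAx hxn1]
          rw [tabIns_split (show A ++ x :: (N' ++ (e1 :: E')) = (A ++ x :: N') ++ e1 :: E'
              by simp) (all_le_append hAz (all_le_cons hxz' hN'z)) he1]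
          rw [tabIns_split (show A ++ ([]:List ℕ) ++ (n1 :: N') ++ (e1 :: E')
              = (A ++ ([]:List ℕ) ++ (n1 :: N')) ++ e1 :: E' by simp)
            (all_le_append (all_le_append hAz all_le_nil) hNz) he1]
          rw [tabIns_split (show (A ++ ([]:List ℕ) ++ (n1 :: N')) ++ z :: E'
              = A ++ n1 :: (N' ++ z :: E') by simp) hAx hxn1]
          rcases N' with _ | ⟨n2, N''⟩
          · rw [tabIns_split (show (A ++ x :: ([]:List ℕ)) ++ z :: E' = (A ++ [x]) ++ z :: E'
                by simp) (all_le_append hAy (all_le_cons hxy all_le_nil)) hyz]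
            rw [tabIns_split (show A ++ x :: (([]:List ℕ) ++ z :: E') = (A ++ [x]) ++ z :: E'
                by simp) (all_le_append hAy (all_le_cons hxy all_le_nil)) hyz]
            rw [ih hrest hn1z he1]
            skip
          · have hn2 : y < n2 := (hN n2 (by simp)).1
            have hn12 : n1 ≤ n2 := (List.isChain_cons_cons.1 hNc).1
            have hn2e1 : n2 < e1 := lt_of_le_of_lt ((hN n2 (by simp)).2) he1
            rw [tabIns_split (show (A ++ x :: (n2 :: N'')) ++ z :: E'
                = (A ++ [x]) ++ n2 :: (N'' ++ z :: E') by simp)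
              (all_le_append hAy (all_le_cons hxy all_le_nil)) hn2]
            rw [tabIns_split (show A ++ x :: ((n2 :: N'') ++ z :: E')
                = (A ++ [x]) ++ n2 :: (N'' ++ z :: E') by simp)
              (all_le_append hAy (all_le_cons hxy all_le_nil)) hn2]
            rw [ih hrest hn12 hn2e1]
            skip
    · -- case A : M = m1 :: M'
      have hm1x : x < m1 := (hM m1 (by simp)).1
      have hMy : ∀ a ∈ m1 :: M', a ≤ y := fun a h => (hM a h).2
      have hM'y : ∀ a ∈ M', a ≤ y := fun a h => (hM a (by simp [h])).2
      have hM'z : ∀ a ∈ M', a ≤ z := fun a h => le_trans (hM'y a h) (le_of_lt hyz)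
      have hMz : ∀ a ∈ m1 :: M', a ≤ z := fun a h => le_trans (hMy a h) (le_of_lt hyz)
      have HY : ∀ a ∈ A ++ x :: M', a ≤ y := all_le_append hAy (all_le_cons hxy hM'y)
      have hm1y : m1 ≤ y := (hM m1 (by simp)).2
      have hm1z : m1 ≤ z := le_trans hm1y (le_of_lt hyz)
      rw [tabIns_split (show A ++ (m1 :: M') ++ N ++ E = A ++ m1 :: (M' ++ (N ++ E)) by simp)
        hAx hm1x]
      rcases E with _ | ⟨e1, E'⟩
      · -- A, E = []
        rw [tabIns_le (all_le_append hAz (all_le_cons hxz'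
          (all_le_append hM'z (all_le_append hNz₀ all_le_nil))))]
        rw [tabIns_le (all_le_append (all_le_append (all_le_append hAz hMz) hNz₀)
          all_le_nil)]
        rw [tabIns_split (show A ++ (m1 :: M') ++ N ++ ([]:List ℕ) ++ [z]
            = A ++ m1 :: (M' ++ (N ++ [z])) by simp) hAx hm1x]
        rcases N with _ | ⟨n1, N'⟩
        · rw [tabIns_split (show (A ++ x :: (M' ++ (([]:List ℕ) ++ ([]:List ℕ)))) ++ [z]
              = (A ++ x :: M') ++ z :: [] by simp) HY hyz]
          rw [tabIns_split (show A ++ x :: (M' ++ (([]:List ℕ) ++ [z]))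
              = (A ++ x :: M') ++ z :: [] by simp) HY hyz]
          skip
        · have hn1 : y < n1 := (hN n1 (by simp)).1
          rw [tabIns_split (show (A ++ x :: (M' ++ ((n1 :: N') ++ ([]:List ℕ)))) ++ [z]
              = (A ++ x :: M') ++ n1 :: (N' ++ [z]) by simp) HY hn1]
          rw [tabIns_split (show A ++ x :: (M' ++ ((n1 :: N') ++ [z]))
              = (A ++ x :: M') ++ n1 :: (N' ++ [z]) by simp) HY hn1]
          skip
      · -- A, E = e1 :: E'
        have he1 : z < e1 := hE e1 (by simp)
        rw [tabIns_split (show A ++ x :: (M' ++ (N ++ (e1 :: E')))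
            = (A ++ x :: (M' ++ N)) ++ e1 :: E' by simp)
          (all_le_append hAz (all_le_cons hxz' (all_le_append hM'z hNz₀))) he1]
        rw [tabIns_split (show A ++ (m1 :: M') ++ N ++ (e1 :: E')
            = (A ++ (m1 :: M') ++ N) ++ e1 :: E' by simp)
          (all_le_append (all_le_append hAz hMz) hNz₀) he1]
        rw [tabIns_split (show (A ++ (m1 :: M') ++ N) ++ z :: E'
            = A ++ m1 :: (M' ++ (N ++ z :: E')) by simp) hAx hm1x]
        rcases N with _ | ⟨n1, N'⟩
        · rw [tabIns_split (show (A ++ x :: (M' ++ ([]:List ℕ))) ++ z :: E'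
              = (A ++ x :: M') ++ z :: E' by simp) HY hyz]
          rw [tabIns_split (show A ++ x :: (M' ++ (([]:List ℕ) ++ z :: E'))
              = (A ++ x :: M') ++ z :: E' by simp) HY hyz]
          rw [ih hrest hm1z he1]
          skip
        · have hn1 : y < n1 := (hN n1 (by simp)).1
          have hm1n1 : m1 ≤ n1 := le_trans hm1y (le_of_lt hn1)
          have hn1e1 : n1 < e1 := lt_of_le_of_lt ((hN n1 (by simp)).2) he1
          rw [tabIns_split (show (A ++ x :: (M' ++ (n1 :: N'))) ++ z :: E'
              = (A ++ x :: M') ++ n1 :: (N' ++ z :: E') by simp) HY hn1]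
          rw [tabIns_split (show A ++ x :: (M' ++ ((n1 :: N') ++ z :: E'))
              = (A ++ x :: M') ++ n1 :: (N' ++ z :: E') by simp) HY hn1]
          rw [ih hrest hm1n1 hn1e1]
          skip

lemma M1 {D : List ℕ} (hD : List.Chain' (·≤·) D) : ∀ {b x : ℕ}, x < b → (∀ d ∈ D, b ≤ d) →
    ∀ S : List (List ℕ), RowsWeak S →
    List.foldl tabInsert S (b :: (D ++ [x])) = List.foldl tabInsert S (b :: x :: D) := by
  induction D with
  | nil => intro b x _ _ S _; rfl
  | cons d D' ih =>
    intro b x hxb hbD S hS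
    have hxd : x < d := lt_of_lt_of_le hxb (hbD d (by simp))
    have h1 : List.foldl tabInsert (tabInsert S b) (d :: (D' ++ [x]))
        = List.foldl tabInsert (tabInsert S b) (d :: x :: D') :=
      ih hD.tail hxd (chain'_le_head hD) _ (rowsWeak_tabInsert hS)
    calc List.foldl tabInsert S (b :: ((d :: D') ++ [x]))
        = List.foldl tabInsert (tabInsert S b) (d :: (D' ++ [x])) := by simp
      _ = List.foldl tabInsert (tabInsert S b) (d :: x :: D') := h1
      _ = List.foldl tabInsert (tabInsert (tabInsert (tabInsert S b) d) x) D' := by simp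
      _ = List.foldl tabInsert (tabInsert (tabInsert (tabInsert S b) x) d) D' := by
            rw [E1 S hS hxb (hbD d (by simp))]
      _ = List.foldl tabInsert S (b :: x :: d :: D') := by simp

lemma M2 {A : List ℕ} (hA : List.Chain' (·≤·) A) : ∀ {b x : ℕ} {D : List ℕ},
    (∀ a ∈ A, a ≤ x) → x < b → ∀ S : List (List ℕ), RowsWeak S →
    List.foldl tabInsert S (A ++ b :: x :: D) = List.foldl tabInsert S (b :: (A ++ x :: D)) := by
  induction A with
  | nil => intro b x D _ _ S _; rfl
  | cons a A' ih =>
    intro b x D hAx hxb S hS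
    have h1 : List.foldl tabInsert (tabInsert S a) (A' ++ b :: x :: D)
        = List.foldl tabInsert (tabInsert S a) (b :: (A' ++ x :: D)) :=
      ih hA.tail (fun c hc => hAx c (by simp [hc])) hxb _ (rowsWeak_tabInsert hS)
    have hax : a ≤ x := hAx a (by simp)
    calc List.foldl tabInsert S ((a :: A') ++ b :: x :: D)
        = List.foldl tabInsert (tabInsert S a) (A' ++ b :: x :: D) := by simp
      _ = List.foldl tabInsert (tabInsert S a) (b :: (A' ++ x :: D)) := h1
      _ = List.foldl tabInsert S (b :: (a :: A' ++ x :: D)) := by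
          rcases A' with _ | ⟨c, A''⟩
          · have := E2 S hS hax hxb
            simp only [List.nil_append, List.foldl_cons]
            rw [this]
            try simp
          · have hac : a ≤ c := (List.isChain_cons_cons.1 hA).1
            have hcb : c < b := lt_of_le_of_lt (hAx c (by simp)) hxb
            have := E2 S hS hac hcb
            simp only [List.cons_append, List.foldl_cons]
            rw [this]
            try simp

lemma RL {R R' : List ℕ} {x b : ℕ} (hR : List.Chain' (·≤·) R)
    (h : rowInsert R x = (R', some b)) :
    ∀ S : List (List ℕ), RowsWeak S →
    List.foldl tabInsert S (R ++ [x]) = List.foldl tabInsert S (b :: R') := by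
  intro S hS
  obtain ⟨P, Q, rfl, hP, hQ, hPc, hQc⟩ := split2 hR x
  rcases Q with _ | ⟨b', Q'⟩
  · rw [List.append_nil] at h ⊢
    rw [rowInsert_all_le hP] at h
    cases h
  · rw [rowInsert_split hP (hQ b' (by simp))] at h
    simp only [Prod.mk.injEq, Option.some.injEq] at h
    obtain ⟨rfl, rfl⟩ := h
    have hxb' : x < b' := hQ b' (by simp)
    calc List.foldl tabInsert S ((P ++ b' :: Q') ++ [x])
        = List.foldl tabInsert S (P ++ (b' :: (Q' ++ [x]))) := by
          rw [show (P ++ b' :: Q') ++ [x] = P ++ (b' :: (Q' ++ [x])) by simp]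
      _ = List.foldl tabInsert (List.foldl tabInsert S P) (b' :: (Q' ++ [x])) := by
          rw [List.foldl_append]
      _ = List.foldl tabInsert (List.foldl tabInsert S P) (b' :: x :: Q') :=
          M1 hQc.tail hxb' (chain'_le_head hQc) _ (rowsWeak_fold hS P)
      _ = List.foldl tabInsert S (P ++ b' :: x :: Q') := by rw [List.foldl_append]
      _ = List.foldl tabInsert S (b' :: (P ++ x :: Q')) := M2 hPc hP hxb' S hS

def Bg (k : ℕ) (T : List (List ℕ)) : List (List ℕ) :=
  T.map (List.filter (fun v => decide (k < v)))

def Sm (k : ℕ) (T : List (List ℕ)) : List (List ℕ) :=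
  T.map (List.filter (fun v => decide (v ≤ k)))

lemma Bg_cons {k : ℕ} {R : List ℕ} {T : List (List ℕ)} :
    Bg k (R :: T) = R.filter (fun v => decide (k < v)) :: Bg k T := rfl

lemma Sm_cons {k : ℕ} {R : List ℕ} {T : List (List ℕ)} :
    Sm k (R :: T) = R.filter (fun v => decide (v ≤ k)) :: Sm k T := rfl

lemma filter_big_of {k : ℕ} {P : List ℕ} (h : ∀ a ∈ P, k < a) :
    P.filter (fun v => decide (k < v)) = P :=
  List.filter_eq_self.2 (fun a ha => by simpa using h a ha)

lemma filter_big_nil {k : ℕ} {P : List ℕ} (h : ∀ a ∈ P, a ≤ k) :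
    P.filter (fun v => decide (k < v)) = [] :=
  List.filter_eq_nil_iff.2 (fun a ha => by simpa using Nat.not_lt.2 (h a ha))

lemma filter_small_of {k : ℕ} {P : List ℕ} (h : ∀ a ∈ P, a ≤ k) :
    P.filter (fun v => decide (v ≤ k)) = P :=
  List.filter_eq_self.2 (fun a ha => by simpa using h a ha)

lemma filter_small_nil {k : ℕ} {P : List ℕ} (h : ∀ a ∈ P, k < a) :
    P.filter (fun v => decide (v ≤ k)) = [] :=
  List.filter_eq_nil_iff.2 (fun a ha => by simpa using Nat.not_le.2 (h a ha))

lemma readWord_cons {R : List ℕ} {T : List (List ℕ)} :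
    readWord (R :: T) = readWord T ++ R := by
  simp [readWord]

lemma BigIns {k : ℕ} : ∀ (T : List (List ℕ)), RowsWeak T → ∀ {x : ℕ}, k < x →
    ∀ S : List (List ℕ), RowsWeak S →
    List.foldl tabInsert S (readWord (Bg k (tabInsert T x)))
      = List.foldl tabInsert S (readWord (Bg k T) ++ [x]) := by
  intro T
  induction T with
  | nil =>
    intro _ x hx S _
    simp [tabInsert, Bg, readWord, List.filter, hx]
  | cons R rest ih =>
    intro hT x hx S hS
    obtain ⟨P, Q, rfl, hP, hQ, hPc, hQc⟩ := split2 hT.head x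
    obtain ⟨Ps, Pm, rfl, hPs, hPm, hPsc, hPmc⟩ := split2 hPc k
    have hQbig : ∀ a ∈ Q, k < a := fun a ha => lt_trans hx (hQ a ha)
    have hfP : (Ps ++ Pm).filter (fun v => decide (k < v)) = Pm := by
      rw [List.filter_append, filter_big_nil hPs, filter_big_of hPm, List.nil_append]
    rcases Q with _ | ⟨q, Q'⟩
    · rw [List.append_nil]
      rw [tabIns_le hP]
      simp only [Bg, List.map_cons, readWord_cons]
      have h1 : ((Ps ++ Pm) ++ [x]).filter (fun v => decide (k < v)) = Pm ++ [x] := by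
        rw [List.filter_append, hfP]
        congr 1
        exact filter_big_of (by intro a ha; rw [List.mem_singleton] at ha; subst ha; exact hx)
      rw [h1, hfP]
      rw [show (readWord (List.map (List.filter fun v => decide (k < v)) rest) ++ (Pm ++ [x]))
          = (readWord (List.map (List.filter fun v => decide (k < v)) rest) ++ Pm) ++ [x] by
        simp]
    · have hxq : x < q := hQ q (by simp)
      have hQ'big : ∀ a ∈ Q', k < a := fun a ha => hQbig a (by simp [ha])
      rw [tabIns_split rfl hP hxq]
      simp only [Bg, List.map_cons, readWord_cons]
      have hxQ'big : ∀ a ∈ x :: Q', k < a := by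
        intro a ha
        rcases List.mem_cons.1 ha with rfl | h
        exacts [hx, hQ'big a h]
      have hqQ'big : ∀ a ∈ q :: Q', k < a := hQbig
      have h1 : ((Ps ++ Pm) ++ x :: Q').filter (fun v => decide (k < v)) = Pm ++ x :: Q' := by
        rw [List.filter_append, hfP, filter_big_of hxQ'big]
      have h2 : ((Ps ++ Pm) ++ q :: Q').filter (fun v => decide (k < v)) = Pm ++ q :: Q' := by
        rw [List.filter_append, hfP, filter_big_of hqQ'big]
      rw [h1, h2]
      have hkq : k < q := hQbig q (by simp)
      have IH := ih hT.tail hkq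
      set W := readWord (List.map (List.filter fun v => decide (k < v)) rest) with hW
      have hWd : readWord (Bg k rest) = W := rfl
      calc List.foldl tabInsert S (readWord (Bg k (tabInsert rest q)) ++ (Pm ++ x :: Q'))
          = List.foldl tabInsert
              (List.foldl tabInsert S (readWord (Bg k (tabInsert rest q)))) (Pm ++ x :: Q') := by
            rw [List.foldl_append]
        _ = List.foldl tabInsert (List.foldl tabInsert S (W ++ [q])) (Pm ++ x :: Q') := by
            rw [IH S hS, hWd]
        _ = List.foldl tabInsert (List.foldl tabInsert S W) (q :: (Pm ++ x :: Q')) := by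
            simp [List.foldl_append]
        _ = List.foldl tabInsert (List.foldl tabInsert S W) ((Pm ++ q :: Q') ++ [x]) := by
            have hch : List.Chain' (·≤·) (Pm ++ q :: Q') := by
              have hsub : List.Sublist (Pm ++ q :: Q') ((Ps ++ Pm) ++ q :: Q') :=
                List.Sublist.append (List.sublist_append_right Ps Pm) (List.Sublist.refl _)
              exact List.IsChain.sublist hT.head hsub
            have hri : rowInsert (Pm ++ q :: Q') x = (Pm ++ x :: Q', some q) :=
              rowInsert_split (fun a ha => hP a (by simp [ha])) hxq
            exact (RL hch hri _ (rowsWeak_fold hS W)).symm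
        _ = List.foldl tabInsert S ((W ++ (Pm ++ q :: Q')) ++ [x]) := by
            simp [List.foldl_append]

lemma SmallIns {k : ℕ} : ∀ (T : List (List ℕ)), RowsWeak T → ∀ {x : ℕ}, x ≤ k →
    ∀ S : List (List ℕ), RowsWeak S →
    List.foldl tabInsert S (readWord (Bg k (tabInsert T x)))
      = List.foldl tabInsert S (readWord (Bg k T)) := by
  intro T
  induction T with
  | nil =>
    intro _ x hxk S _
    simp [tabInsert, Bg, readWord, List.filter, Nat.not_lt.2 hxk]
  | cons R rest ih =>
    intro hT x hxk S hS
    obtain ⟨P, Q, rfl, hP, hQ, hPc, hQc⟩ := split2 hT.head x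
    have hPsm : ∀ a ∈ P, a ≤ k := fun a ha => le_trans (hP a ha) hxk
    have hfP : P.filter (fun v => decide (k < v)) = [] := filter_big_nil hPsm
    rcases Q with _ | ⟨q, Q'⟩
    · rw [List.append_nil]
      rw [tabIns_le hP]
      simp only [Bg_cons, readWord_cons]
      have h1 : (P ++ [x]).filter (fun v => decide (k < v)) = [] := by
        rw [List.filter_append, hfP]
        simp [Nat.not_lt.2 hxk]
      rw [h1, hfP]
    · have hxq : x < q := hQ q (by simp)
      rw [tabIns_split rfl hP hxq]
      simp only [Bg_cons, readWord_cons]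
      by_cases hqk : q ≤ k
      · have h1 : (P ++ x :: Q').filter (fun v => decide (k < v))
            = Q'.filter (fun v => decide (k < v)) := by
          rw [List.filter_append, hfP, List.nil_append,
            List.filter_cons_of_neg (by simp [Nat.not_lt.2 hxk])]
        have h2 : (P ++ q :: Q').filter (fun v => decide (k < v))
            = Q'.filter (fun v => decide (k < v)) := by
          rw [List.filter_append, hfP, List.nil_append,
            List.filter_cons_of_neg (by simp [Nat.not_lt.2 hqk])]
        rw [h1, h2]
        rw [List.foldl_append, List.foldl_append, ih hT.tail hqk S hS]
      · have hkq : k < q := Nat.not_le.1 hqk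
        have hQ'big : ∀ a ∈ Q', k < a := fun a ha =>
          lt_of_lt_of_le hkq (chain'_le_head hQc a ha)
        have h1 : (P ++ x :: Q').filter (fun v => decide (k < v)) = Q' := by
          rw [List.filter_append, hfP, List.nil_append,
            List.filter_cons_of_neg (by simp [Nat.not_lt.2 hxk]), filter_big_of hQ'big]
        have h2 : (P ++ q :: Q').filter (fun v => decide (k < v)) = q :: Q' := by
          rw [List.filter_append, hfP, List.nil_append]
          exact filter_big_of (by
            intro a ha
            rcases List.mem_cons.1 ha with rfl | h
            exacts [hkq, hQ'big a h])
        rw [h1, h2]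
        rw [List.foldl_append, BigIns rest hT.tail hkq S hS]
        rw [show readWord (Bg k rest) ++ q :: Q' = (readWord (Bg k rest) ++ [q]) ++ Q' by simp]
        simp [List.foldl_append]

def RowsNE (T : List (List ℕ)) : Prop := ∀ r ∈ T, r ≠ []

lemma rowInsert_fst_ne {R : List ℕ} {x : ℕ} : (rowInsert R x).1 ≠ [] := by
  cases R with
  | nil => simp [rowInsert]
  | cons a r =>
    by_cases h : a ≤ x <;> simp [rowInsert, h]

lemma rowsNE_tabInsert {T : List (List ℕ)} {x : ℕ} (h : RowsNE T) : RowsNE (tabInsert T x) := by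
  induction T generalizing x with
  | nil => intro r hr; simp only [tabInsert, List.mem_singleton] at hr; subst hr; simp
  | cons row rest ih =>
    intro r hr
    rcases hri : rowInsert row x with ⟨row', o⟩
    rcases o with _ | b
    · rw [tabInsert_of_none hri] at hr
      rcases List.mem_cons.1 hr with rfl | hr
      · rw [show r = (rowInsert row x).1 by rw [hri]]; exact rowInsert_fst_ne
      · exact h r (by simp [hr])
    · rw [tabInsert_of_some hri] at hr
      rcases List.mem_cons.1 hr with rfl | hr
      · rw [show r = (rowInsert row x).1 by rw [hri]]; exact rowInsert_fst_ne
      · exact ih (fun r' hr' => h r' (by simp [hr'])) r hr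

lemma P1a {k : ℕ} : ∀ (T : List (List ℕ)), RowsWeak T → ∀ {x : ℕ}, k < x →
    Sm k (tabInsert T x) = Sm k T ∨ Sm k (tabInsert T x) = Sm k T ++ [[]] := by
  intro T
  induction T with
  | nil =>
    intro _ x hx
    right
    simp [tabInsert, Sm, List.filter, Nat.not_le.2 hx]
  | cons R rest ih =>
    intro hT x hx
    obtain ⟨P, Q, rfl, hP, hQ, hPc, hQc⟩ := split2 hT.head x
    obtain ⟨Ps, Pm, rfl, hPs, hPm, hPsc, hPmc⟩ := split2 hPc k
    have hfP : (Ps ++ Pm).filter (fun v => decide (v ≤ k)) = Ps := by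
      rw [List.filter_append, filter_small_of hPs, filter_small_nil hPm, List.append_nil]
    have hQbig : ∀ a ∈ Q, k < a := fun a ha => lt_trans hx (hQ a ha)
    rcases Q with _ | ⟨q, Q'⟩
    · left
      rw [List.append_nil, tabIns_le hP]
      simp only [Sm_cons]
      congr 1
      rw [List.filter_append, hfP]
      simp [Nat.not_le.2 hx]
    · have hxq : x < q := hQ q (by simp)
      have hQ'big : ∀ a ∈ Q', k < a := fun a ha => hQbig a (by simp [ha])
      rw [tabIns_split rfl hP hxq]
      simp only [Sm_cons]
      have h1 : ((Ps ++ Pm) ++ x :: Q').filter (fun v => decide (v ≤ k)) = Ps := by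
        rw [List.filter_append, hfP, filter_small_nil (by
          intro c hc
          rcases List.mem_cons.1 hc with rfl | h
          exacts [hx, hQ'big c h]), List.append_nil]
      have h2 : ((Ps ++ Pm) ++ q :: Q').filter (fun v => decide (v ≤ k)) = Ps := by
        rw [List.filter_append, hfP, filter_small_nil (by
          intro c hc
          rcases List.mem_cons.1 hc with rfl | h
          exacts [hQbig c (by simp), hQ'big c h]), List.append_nil]
      rw [h1, h2]
      rcases ih hT.tail (hQbig q (by simp)) with h | h
      · left; rw [h]
      · right; rw [h]; simp

lemma P1b {k : ℕ} : ∀ (T L : List (List ℕ)) (e : ℕ), RowsWeak T → RowsNE T →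
    ∀ {x : ℕ}, x ≤ k → Sm k T = L ++ List.replicate e [] →
    ∃ e', Sm k (tabInsert T x) = tabInsert L x ++ List.replicate e' [] := by
  intro T
  induction T with
  | nil =>
    intro L e _ _ x hx h
    have h' : L ++ List.replicate e [] = [] := h.symm
    have hL : L = [] := (List.append_eq_nil_iff.1 h').1
    subst hL
    refine ⟨0, ?_⟩
    simp [tabInsert, Sm, filter_small_of (show ∀ a ∈ [x], a ≤ k by simpa using hx)]
  | cons R rest ih =>
    intro L e hW hNE x hx h
    rw [Sm_cons] at h
    rcases L with _ | ⟨L1, L'⟩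
    · rcases e with _ | e'
      · simp at h
      · rw [List.nil_append, List.replicate_succ] at h
        obtain ⟨hfR, hrest⟩ := List.cons.injEq _ _ _ _ ▸ h
        have hRbig : ∀ a ∈ R, k < a := by
          intro a ha
          by_contra hc
          have : a ∈ R.filter (fun v => decide (v ≤ k)) :=
            List.mem_filter.2 ⟨ha, by simpa using Nat.not_lt.1 hc⟩
          rw [hfR] at this
          simp at this
        rcases R with _ | ⟨a, R₀⟩
        · exact absurd rfl (hNE [] (by simp))
        · have hxa : x < a := lt_of_le_of_lt hx (hRbig a (by simp))
          have hri : rowInsert (a :: R₀) x = (x :: R₀, some a) := by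
            simp [rowInsert, Nat.not_le.2 hxa]
          rw [tabInsert_of_some hri, Sm_cons]
          have hfx : (x :: R₀).filter (fun v => decide (v ≤ k)) = [x] := by
            rw [List.filter_cons_of_pos (by simpa using hx),
              filter_small_nil (fun c hc => hRbig c (by simp [hc]))]
          rw [hfx]
          rcases P1a rest hW.tail (hRbig a (by simp)) with hh | hh
          · exact ⟨e', by rw [hh, hrest]; simp [tabInsert]⟩
          · refine ⟨e' + 1, ?_⟩
            rw [hh, hrest]
            simp [tabInsert, List.replicate_succ']
    · obtain ⟨hfR, hrest⟩ := List.cons.injEq _ _ _ _ ▸ h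
      obtain ⟨P, Q, rfl, hP, hQ, hPc, hQc⟩ := split2 hW.head x
      have hPsm : ∀ a ∈ P, a ≤ k := fun a ha => le_trans (hP a ha) hx
      rcases Q with _ | ⟨q, Q'⟩
      · rw [List.append_nil] at hfR ⊢
        rw [tabIns_le hP, Sm_cons]
        have hfPx : (P ++ [x]).filter (fun v => decide (v ≤ k)) = P ++ [x] :=
          filter_small_of (by
            intro c hc
            rcases List.mem_append.1 hc with h' | h'
            · exact hPsm c h'
            · rw [List.mem_singleton] at h'; subst h'; exact hx)
        rw [hfPx]
        have hL1 : L1 = P := by rw [← hfR, filter_small_of hPsm]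
        subst hL1
        refine ⟨e, ?_⟩
        rw [tabInsert_of_none (rowInsert_all_le (fun c hc => le_trans ?_ (le_refl x)))]
        · rw [hrest]; simp
        · exact hP c hc
      · have hxq : x < q := hQ q (by simp)
        rw [tabIns_split rfl hP hxq, Sm_cons]
        by_cases hqk : q ≤ k
        · have hfR' : (P ++ q :: Q').filter (fun v => decide (v ≤ k))
              = P ++ q :: Q'.filter (fun v => decide (v ≤ k)) := by
            rw [List.filter_append, filter_small_of hPsm,
              List.filter_cons_of_pos (by simpa using hqk)]
          have hL1 : L1 = P ++ q :: Q'.filter (fun v => decide (v ≤ k)) := by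
            rw [← hfR, hfR']
          subst hL1
          have hri : rowInsert (P ++ q :: Q'.filter (fun v => decide (v ≤ k))) x
              = (P ++ x :: Q'.filter (fun v => decide (v ≤ k)), some q) :=
            rowInsert_split hP hxq
          rw [tabInsert_of_some hri]
          obtain ⟨e', he'⟩ := ih L' e hW.tail (fun r hr => hNE r (by simp [hr])) hqk hrest
          refine ⟨e', ?_⟩
          rw [he']
          have : (P ++ x :: Q').filter (fun v => decide (v ≤ k))
              = P ++ x :: Q'.filter (fun v => decide (v ≤ k)) := by
            rw [List.filter_append, filter_small_of hPsm,
              List.filter_cons_of_pos (by simpa using hx)]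
          rw [this]
          simp
        · have hkq : k < q := Nat.not_le.1 hqk
          have hQ'big : ∀ a ∈ Q', k < a := fun a ha =>
            lt_of_lt_of_le hkq (chain'_le_head hQc a ha)
          have hfR' : (P ++ q :: Q').filter (fun v => decide (v ≤ k)) = P := by
            rw [List.filter_append, filter_small_of hPsm, filter_small_nil (by
              intro c hc
              rcases List.mem_cons.1 hc with rfl | h'
              exacts [hkq, hQ'big c h']), List.append_nil]
          have hL1 : L1 = P := by rw [← hfR, hfR']
          have hfx : (P ++ x :: Q').filter (fun v => decide (v ≤ k)) = P ++ [x] := by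
            rw [List.filter_append, filter_small_of hPsm,
              List.filter_cons_of_pos (by simpa using hx), filter_small_nil hQ'big]
          rw [hfx, hL1]
          rw [tabInsert_of_none (rowInsert_all_le hP)]
          rcases P1a rest hW.tail hkq with hh | hh
          · exact ⟨e, by rw [hh, hrest]; simp⟩
          · exact ⟨e + 1, by rw [hh, hrest]; simp [List.replicate_succ']⟩

lemma rowInsert_mem {R : List ℕ} {x : ℕ} :
    (∀ v ∈ (rowInsert R x).1, v = x ∨ v ∈ R) ∧
    (∀ b, (rowInsert R x).2 = some b → b ∈ R) := by
  induction R with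
  | nil => constructor <;> simp [rowInsert]
  | cons a r ih =>
    by_cases h : a ≤ x
    · simp only [rowInsert, if_pos h]
      constructor
      · intro v hv
        rcases List.mem_cons.1 hv with rfl | hv
        · right; simp
        · rcases ih.1 v hv with h' | h'
          · left; exact h'
          · right; simp [h']
      · intro b hb
        exact List.mem_cons.2 (Or.inr (ih.2 b hb))
    · simp only [rowInsert, if_neg h]
      constructor
      · intro v hv
        rcases List.mem_cons.1 hv with rfl | hv
        · left; rfl
        · right; simp [hv]
      · intro b hb
        simp only [Option.some.injEq] at hb
        subst hb; simp

lemma mem_flatten_tabInsert {T : List (List ℕ)} {x v : ℕ}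
    (h : v ∈ (tabInsert T x).flatten) : v = x ∨ v ∈ T.flatten := by
  induction T generalizing x with
  | nil => simp [tabInsert] at h; left; exact h
  | cons row rest ih =>
    rcases hri : rowInsert row x with ⟨row', o⟩
    rcases o with _ | b
    · rw [tabInsert_of_none hri] at h
      simp only [List.flatten_cons, List.mem_append] at h ⊢
      rcases h with h | h
      · rcases rowInsert_mem.1 v (by rw [hri]; exact h) with h' | h'
        · left; exact h'
        · right; left; exact h'
      · right; right; exact h
    · rw [tabInsert_of_some hri] at h
      simp only [List.flatten_cons, List.mem_append] at h ⊢
      rcases h with h | h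
      · rcases rowInsert_mem.1 v (by rw [hri]; exact h) with h' | h'
        · left; exact h'
        · right; left; exact h'
      · rcases ih h with rfl | h'
        · right; left; exact rowInsert_mem.2 v (by rw [hri])
        · right; right; exact h'

lemma rowInsert_map_sub {k : ℕ} {R : List ℕ} {x : ℕ} (hR : ∀ a ∈ R, k < a) (hx : k < x) :
    rowInsert (R.map (· - k)) (x - k)
      = ((rowInsert R x).1.map (· - k), (rowInsert R x).2.map (· - k)) := by
  induction R with
  | nil => simp [rowInsert]
  | cons a r ih =>
    have hka : k < a := hR a (by simp)
    have hiff : a - k ≤ x - k ↔ a ≤ x := tsub_le_tsub_iff_right (le_of_lt hx)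
    by_cases h : a ≤ x
    · have h' : a - k ≤ x - k := hiff.2 h
      simp only [List.map_cons, rowInsert, if_pos h, if_pos h']
      rw [ih (fun c hc => hR c (by simp [hc]))]
    · have h' : ¬ a - k ≤ x - k := fun hc => h (hiff.1 hc)
      simp only [List.map_cons, rowInsert, if_neg h, if_neg h']
      simp

lemma tabInsert_map_sub {k : ℕ} : ∀ (T : List (List ℕ)) {x : ℕ},
    (∀ v ∈ T.flatten, k < v) → k < x →
    tabInsert (T.map (List.map (· - k))) (x - k) = (tabInsert T x).map (List.map (· - k)) := by
  intro T
  induction T with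
  | nil => intro x _ _; simp [tabInsert]
  | cons row rest ih =>
    intro x hT hx
    have hrow : ∀ a ∈ row, k < a := fun a ha => hT a (by simp [ha])
    rcases hri : rowInsert row x with ⟨row', o⟩
    have hmap := rowInsert_map_sub hrow hx
    rw [hri] at hmap
    rcases o with _ | b
    · rw [tabInsert_of_none hri]
      simp only [List.map_cons]
      rw [tabInsert_of_none (by simpa using hmap)]
    · rw [tabInsert_of_some hri]
      simp only [List.map_cons]
      rw [tabInsert_of_some (by simpa using hmap)]
      have hb : b ∈ row := rowInsert_mem.2 b (by rw [hri])
      rw [ih (fun v hv => hT v (by simp [List.mem_flatten] at hv ⊢; tauto)) (hrow b hb)]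

lemma fold_map_sub {k : ℕ} : ∀ (w : List ℕ) (T : List (List ℕ)),
    (∀ v ∈ T.flatten, k < v) → (∀ v ∈ w, k < v) →
    List.foldl tabInsert (T.map (List.map (· - k))) (w.map (· - k))
      = (List.foldl tabInsert T w).map (List.map (· - k)) := by
  intro w
  induction w with
  | nil => intro T _ _; simp
  | cons a w ih =>
    intro T hT hw
    have hka : k < a := hw a (by simp)
    simp only [List.map_cons, List.foldl_cons]
    rw [tabInsert_map_sub T hT hka]
    exact ih _ (fun v hv => by
      rcases mem_flatten_tabInsert hv with rfl | h
      exacts [hka, hT v h]) (fun v hv => hw v (by simp [hv]))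

lemma RSKP_map_sub {k : ℕ} {w : List ℕ} (hw : ∀ v ∈ w, k < v) :
    RSKP (w.map (· - k)) = (RSKP w).map (List.map (· - k)) := by
  have := fold_map_sub w [] (by simp) hw
  simpa [RSKP] using this

lemma main_inv (k : ℕ) (w : List ℕ) :
    RowsWeak (RSKP w) ∧ RowsNE (RSKP w) ∧
    (∀ v ∈ (RSKP w).flatten, v ∈ w) ∧
    (∃ e, Sm k (RSKP w) = RSKP (w.filter (fun v => decide (v ≤ k))) ++ List.replicate e []) ∧
    (∀ S, RowsWeak S → List.foldl tabInsert S (readWord (Bg k (RSKP w)))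
        = List.foldl tabInsert S (w.filter (fun v => decide (k < v)))) := by
  induction w using List.reverseRecOn with
  | nil =>
    refine ⟨?_, ?_, ?_, ⟨0, ?_⟩, ?_⟩
    · intro r hr; simp [RSKP] at hr
    · intro r hr; simp [RSKP] at hr
    · intro v hv; simp [RSKP] at hv
    · simp [RSKP, Sm]
    · intro S _; simp [RSKP, Bg, readWord]
  | append_singleton w x ih =>
    obtain ⟨h1, h2, h3, ⟨e, h4⟩, h5⟩ := ih
    have hR : RSKP (w ++ [x]) = tabInsert (RSKP w) x := by
      simp [RSKP, List.foldl_append]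
    refine ⟨?_, ?_, ?_, ?_, ?_⟩
    · rw [hR]; exact rowsWeak_tabInsert h1
    · rw [hR]; exact rowsNE_tabInsert h2
    · rw [hR]
      intro v hv
      rcases mem_flatten_tabInsert hv with rfl | h
      · simp
      · simp [h3 v h]
    · rw [hR]
      by_cases hx : x ≤ k
      · obtain ⟨e', he'⟩ := P1b (RSKP w) _ e h1 h2 hx h4
        refine ⟨e', ?_⟩
        rw [he']
        congr 2
        have hfa : (w ++ [x]).filter (fun v => decide (v ≤ k))
            = w.filter (fun v => decide (v ≤ k)) ++ [x] := by
          rw [List.filter_append]; simp [hx]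
        rw [hfa]
        simp [RSKP, List.foldl_append]
      · have hkx : k < x := Nat.not_le.1 hx
        have hfa : (w ++ [x]).filter (fun v => decide (v ≤ k))
            = w.filter (fun v => decide (v ≤ k)) := by
          rw [List.filter_append]; simp [Nat.not_le.2 hkx]
        rw [hfa]
        rcases P1a (RSKP w) h1 hkx with hh | hh
        · exact ⟨e, by rw [hh, h4]⟩
        · refine ⟨e + 1, ?_⟩
          rw [hh, h4, List.replicate_succ' (n := e) (a := ([] : List ℕ))]
          simp
    · intro S hS
      rw [hR]
      by_cases hx : x ≤ k
      · have hfa : (w ++ [x]).filter (fun v => decide (k < v))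
            = w.filter (fun v => decide (k < v)) := by
          rw [List.filter_append]; simp [Nat.not_lt.2 hx]
        rw [hfa, SmallIns (RSKP w) h1 hx S hS, h5 S hS]
      · have hkx : k < x := Nat.not_le.1 hx
        have hfa : (w ++ [x]).filter (fun v => decide (k < v))
            = w.filter (fun v => decide (k < v)) ++ [x] := by
          rw [List.filter_append]; simp [hkx]
        rw [hfa, BigIns (RSKP w) h1 hkx S hS, List.foldl_append, List.foldl_append, h5 S hS]


/-- Let `σ ∈ S_k`, `τ ∈ S_ℓ`, `n = k + ℓ`, and let `ρ ∈ Sₙ` be a shuffle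
of `σ` and `τ̄` (where `τ̄` adds `k` to every letter of `τ`). Then the RSK insertion
tableau of `ρ` restricted to the entries `{1, …, k}` equals `P(σ)`, and the
standardization of its restriction to the entries `{k+1, …, n}` equals `P(τ)`. -/
theorem shuffle_restriction_insertion_tableaux (k l : ℕ) (σ τ ρ : List ℕ)
    (hσ : IsPermWord k σ) (hτ : IsPermWord l τ) (hρ : IsPermWord (k + l) ρ)
    (h₁ : ρ.filter (fun v => decide (v ≤ k)) = σ)
    (h₂ : ρ.filter (fun v => decide (k < v)) = τ.map (· + k)) :
    (restrictTab (RSKP ρ) 1 k).filter (fun r => decide (r ≠ [])) = RSKP σ ∧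
      stTab (RSKP ρ) (k + 1) (k + l) = RSKP τ := by
  obtain ⟨h1, h2, h3, ⟨e, h4⟩, h5⟩ := main_inv k ρ
  have hbound : ∀ v ∈ (RSKP ρ).flatten, 1 ≤ v ∧ v ≤ k + l := by
    intro v hv
    have hm := h3 v hv
    have := hρ.mem_iff.1 hm
    rw [List.mem_range'_1] at this
    omega
  constructor
  · have hrT : restrictTab (RSKP ρ) 1 k = Sm k (RSKP ρ) := by
      unfold restrictTab Sm
      apply List.map_congr_left
      intro r hr
      apply List.filter_congr
      intro v hv
      have hb := hbound v (List.mem_flatten.2 ⟨r, hr, hv⟩)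
      apply decide_eq_decide.2
      exact ⟨fun h => h.2, fun h => ⟨hb.1, h⟩⟩
    rw [hrT, h4, h₁, List.filter_append]
    have hNEσ : RowsNE (RSKP σ) := (main_inv k σ).2.1
    have hf1 : (RSKP σ).filter (fun r => decide (r ≠ [])) = RSKP σ :=
      List.filter_eq_self.2 (fun r hr => by simpa using hNEσ r hr)
    have hf2 : (List.replicate e ([] : List ℕ)).filter (fun r => decide (r ≠ [])) = [] :=
      List.filter_eq_nil_iff.2 (fun r hr => by
        rw [List.eq_of_mem_replicate hr]; simp)
    rw [hf1, hf2, List.append_nil]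
  · have hrB : restrictTab (RSKP ρ) (k + 1) (k + l) = Bg k (RSKP ρ) := by
      unfold restrictTab Bg
      apply List.map_congr_left
      intro r hr
      apply List.filter_congr
      intro v hv
      have hb := hbound v (List.mem_flatten.2 ⟨r, hr, hv⟩)
      apply decide_eq_decide.2
      constructor
      · intro h; omega
      · intro h; omega
    have hread_big : ∀ v ∈ readWord (Bg k (RSKP ρ)), k < v := by
      intro v hv
      simp only [readWord, Bg, List.mem_flatten] at hv
      obtain ⟨r, hr, hvr⟩ := hv
      rw [List.mem_reverse, List.mem_map] at hr
      obtain ⟨r₀, _, rfl⟩ := hr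
      have := (List.mem_filter.1 hvr).2
      simpa using this
    have hτbig : ∀ v ∈ τ.map (· + k), k < v := by
      intro v hv
      rw [List.mem_map] at hv
      obtain ⟨t, ht, rfl⟩ := hv
      have := hτ.mem_iff.1 ht
      rw [List.mem_range'_1] at this
      omega
    have key : RSKP (readWord (Bg k (RSKP ρ))) = RSKP (τ.map (· + k)) := by
      have hh := h5 [] (by intro r hr; simp at hr)
      rw [h₂] at hh
      exact hh
    have hsub : stTab (RSKP ρ) (k + 1) (k + l)
        = RSKP ((readWord (Bg k (RSKP ρ))).map (fun v => v - k)) := by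
      unfold stTab
      rw [hrB]
      congr 1
    rw [hsub]
    calc RSKP ((readWord (Bg k (RSKP ρ))).map (fun v => v - k))
        = (RSKP (readWord (Bg k (RSKP ρ)))).map (List.map (· - k)) := RSKP_map_sub hread_big
      _ = (RSKP (τ.map (· + k))).map (List.map (· - k)) := by rw [key]
      _ = RSKP ((τ.map (· + k)).map (· - k)) := (RSKP_map_sub hτbig).symm
      _ = RSKP τ := by
            congr 1
            rw [List.map_map]
            exact List.map_congr_left (fun a _ => by simp) |>.trans (List.map_id τ)
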